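/- Let l be an odd prime, G a group whose commutator subgroup [G,G] is contained in its center Z(G), G' an abelian normal subgroup of G, and a ∈ G an element with a^l ∈ G'. Then for every group homomorphism χ' : G' → ℂ^× and every g' ∈ G', one has Π_{i=0}^{l−1} χ'(a^i g' a^{−i}) = χ'(g')^l. (Lemma 4.3(2).) -/

import Mathlib

/-- **Lemma 4.3(2)**: if `[G,G] ⊆ Z(G)`, `G'` is an abelian normal subgroup and
`a^l ∈ G'`, then for every homomorphism `χ' : G' → ℂˣ` and every `g' ∈ G'` one has
`Π_{i=0}^{l−1} χ'(a^i g' a^{−i}) = χ'(g')^l`. -/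
theorem stmt3 (l : ℕ) (hl : l.Prime) (hodd : Odd l)
    (G : Type*) [Group G] (hcen : commutator G ≤ Subgroup.center G)
    (G' : Subgroup G) [hN : G'.Normal] (hab : ∀ x y : G', x * y = y * x)
    (a : G) (ha : a ^ l ∈ G')
    (χ' : G' →* ℂˣ) (g' : G) (hg' : g' ∈ G') :
    ∏ i ∈ Finset.range l, χ' ⟨a ^ i * g' * (a ^ i)⁻¹, hN.conj_mem g' hg' (a ^ i)⟩
      = χ' ⟨g', hg'⟩ ^ l := by
  set c : G := @Bracket.bracket G G commutatorElement a g' with hc_def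
  have hc_cen : c ∈ Subgroup.center G :=
    hcen (Subgroup.commutator_mem_commutator (Subgroup.mem_top a) (Subgroup.mem_top g'))
  have hc_comm : ∀ z : G, c * z = z * c := fun z =>
    ((Subgroup.mem_center_iff.mp hc_cen) z).symm
  have hc_mem : c ∈ G' := by
    have h1 : a * g' * a⁻¹ ∈ G' := hN.conj_mem g' hg' a
    have : (a * g' * a⁻¹) * g'⁻¹ ∈ G' := G'.mul_mem h1 (G'.inv_mem hg')
    simpa [hc_def, commutatorElement_def, mul_assoc] using this
  -- conjugation formula
  have hconj : ∀ n : ℕ, a ^ n * g' * (a ^ n)⁻¹ = c ^ n * g' := by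
    intro n
    induction n with
    | zero => simp
    | succ n ih =>
      have : a ^ (n+1) * g' * (a ^ (n+1))⁻¹ = a * (a ^ n * g' * (a ^ n)⁻¹) * a⁻¹ := by
        group
      rw [this, ih, pow_succ]
      have hcn : a * (c ^ n * g') * a⁻¹ = c ^ n * (a * g' * a⁻¹) := by
        have hcA : Commute c a := hc_comm a
        have hca : c ^ n * a = a * c ^ n := (hcA.pow_left n)
        calc a * (c ^ n * g') * a⁻¹ = (a * c ^ n) * g' * a⁻¹ := by group
          _ = (c ^ n * a) * g' * a⁻¹ := by rw [hca]
          _ = c ^ n * (a * g' * a⁻¹) := by group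
      rw [hcn]
      have : a * g' * a⁻¹ = c * g' := by
        simp [hc_def, commutatorElement_def, mul_assoc]
      rw [this, mul_assoc]
  -- c^l = 1
  have hcl : c ^ l = 1 := by
    have h1 : a ^ l * g' * (a ^ l)⁻¹ = c ^ l * g' := hconj l
    have h2 : a ^ l * g' = g' * a ^ l := by
      have := hab ⟨a ^ l, ha⟩ ⟨g', hg'⟩
      exact congrArg Subtype.val this
    have h3 : a ^ l * g' * (a ^ l)⁻¹ = g' := by
      rw [h2]; group
    have := h1.symm.trans h3
    exact mul_right_cancel (by rw [this, one_mul])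
  set C : G' := ⟨c, hc_mem⟩ with hC_def
  have hCl : C ^ l = 1 := by
    ext
    simpa using hcl
  have hterm : ∀ i : ℕ, (⟨a ^ i * g' * (a ^ i)⁻¹, hN.conj_mem g' hg' (a ^ i)⟩ : G')
      = C ^ i * ⟨g', hg'⟩ := by
    intro i
    ext
    simpa using hconj i
  calc ∏ i ∈ Finset.range l, χ' ⟨a ^ i * g' * (a ^ i)⁻¹, hN.conj_mem g' hg' (a ^ i)⟩
      = ∏ i ∈ Finset.range l, (χ' C ^ i * χ' ⟨g', hg'⟩) := by
        refine Finset.prod_congr rfl fun i _ => ?_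
        rw [hterm i, map_mul, map_pow]
    _ = (χ' C) ^ (∑ i ∈ Finset.range l, i) * χ' ⟨g', hg'⟩ ^ l := by
        rw [Finset.prod_mul_distrib, Finset.prod_pow_eq_pow_sum, Finset.prod_const,
          Finset.card_range]
    _ = χ' ⟨g', hg'⟩ ^ l := by
        have hdvd : l ∣ ∑ i ∈ Finset.range l, i := by
          have h2 : (∑ i ∈ Finset.range l, i) * 2 = l * (l - 1) :=
            Finset.sum_range_id_mul_two l
          have : l ∣ (∑ i ∈ Finset.range l, i) * 2 := h2 ▸ Dvd.intro (l - 1) rfl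
          exact (Nat.Coprime.dvd_of_dvd_mul_right
            (Nat.coprime_two_right.mpr hodd) this)
        obtain ⟨k, hk⟩ := hdvd
        rw [hk, pow_mul, ← map_pow, hCl, map_one, one_pow, one_mul]
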